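/- For every natural number x ≥ 2, the number of primes p with x ≤ p ≤ x² is at least x; that is, π(x²) − π(x − 1) ≥ x. -/

import Mathlib

open Nat Finset

lemma centralBinom_le_pow_aux (n : ℕ) (hn : 0 < n) :
    Nat.centralBinom n ≤ (2 * n) ^ Nat.primeCounting (2 * n) := by
  have h2n : 0 < 2 * n := by omega
  have hne : Nat.centralBinom n ≠ 0 := (Nat.centralBinom_pos n).ne'
  set N := Nat.centralBinom n with hN
  have hprod : N.factorization.prod (· ^ ·) = N := Nat.factorization_prod_pow_eq_self hne
  rw [Finsupp.prod] at hprod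
  have hbound : ∀ p ∈ N.factorization.support, p ^ N.factorization p ≤ 2 * n := by
    intro p hp
    exact Nat.pow_factorization_choose_le h2n
  have h1 := Finset.prod_le_pow_card _ _ _ hbound
  rw [hprod] at h1
  have hsub : N.factorization.support ⊆ Nat.primesBelow (2 * n + 1) := by
    intro p hp
    have hprime : p.Prime :=
      Nat.prime_of_mem_primeFactors (by rwa [Nat.support_factorization] at hp)
    have hfp : N.factorization p ≠ 0 := Finsupp.mem_support_iff.mp hp
    have hple : p ≤ 2 * n := le_trans (Nat.le_self_pow hfp p) (hbound p hp)
    exact Nat.mem_primesBelow.mpr ⟨by omega, hprime⟩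
  have hcard : N.factorization.support.card ≤ Nat.primeCounting (2 * n) := by
    have := Finset.card_le_card hsub
    rwa [Nat.primesBelow_card_eq_primeCounting'] at this
  exact le_trans h1 (Nat.pow_le_pow_right h2n hcard)

lemma cheb_lower_aux (n : ℕ) (hn : 4 ≤ n) :
    2 * n / Nat.clog 2 (2 * n) ≤ Nat.primeCounting (2 * n) := by
  set m := 2 * n with hm
  set L := Nat.clog 2 m with hL
  have hL0 : 0 < L := Nat.clog_pos one_lt_two (by omega)
  have h1 : 4 ^ n < n * Nat.centralBinom n := Nat.four_pow_lt_mul_centralBinom n hn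
  have h2 : n * Nat.centralBinom n ≤ m ^ (Nat.primeCounting m + 1) := by
    calc n * Nat.centralBinom n ≤ m * m ^ Nat.primeCounting m :=
          Nat.mul_le_mul (by omega) (centralBinom_le_pow_aux n (by omega))
      _ = m ^ (Nat.primeCounting m + 1) := by ring
  have hm2L : m ≤ 2 ^ L := Nat.le_pow_clog one_lt_two m
  have h3 : 2 ^ m < 2 ^ (L * (Nat.primeCounting m + 1)) := by
    calc 2 ^ m = 4 ^ n := by rw [hm, pow_mul]; norm_num
      _ < m ^ (Nat.primeCounting m + 1) := lt_of_lt_of_le h1 h2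
      _ ≤ (2 ^ L) ^ (Nat.primeCounting m + 1) := Nat.pow_le_pow_left hm2L _
      _ = 2 ^ (L * (Nat.primeCounting m + 1)) := by rw [← pow_mul]
  have h4 : m < L * (Nat.primeCounting m + 1) :=
    (Nat.pow_lt_pow_iff_right one_lt_two).mp h3
  have h5 : m / L < Nat.primeCounting m + 1 := by
    rw [Nat.div_lt_iff_lt_mul hL0]
    calc m < L * (Nat.primeCounting m + 1) := h4
      _ = (Nat.primeCounting m + 1) * L := mul_comm _ _
  omega

lemma three_clog_le_aux (c : ℕ) (hc : 5 ≤ c) : 3 * c ≤ 2 ^ (c - 1) := by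
  induction c with
  | zero => omega
  | succ k ih =>
    rcases Nat.lt_or_ge k 5 with h | h
    · interval_cases k <;> first | omega | norm_num
    · have hih := ih (by omega)
      have hdou : (2:ℕ) ^ (k - 1) + 2 ^ (k - 1) = 2 ^ k := by
        have hk : k - 1 + 1 = k := by omega
        rw [← two_mul, ← hk, _root_.pow_succ']
        simp
      have h8 : (8:ℕ) ≤ 2 ^ (k - 1) := by
        calc (8:ℕ) = 2 ^ 3 := by norm_num
          _ ≤ 2 ^ (k - 1) := Nat.pow_le_pow_right (by norm_num) (by omega)
      simp only [Nat.add_sub_cancel]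
      omega

/-- For every natural number `x ≥ 2`, the number of primes `p` with `x ≤ p ≤ x²`,
i.e. `π(x²) − π(x − 1)`, is at least `x`. -/
theorem primes_in_closed_range_ge_self
    (x : ℕ) (hx : 2 ≤ x) :
    x ≤ Nat.primeCounting (x ^ 2) - Nat.primeCounting (x - 1) := by
  rcases Nat.lt_or_ge x 9 with hlt | hge9
  · interval_cases x <;> decide
  rcases Nat.lt_or_ge x 17 with hlt | hge
  · -- 9 ≤ x ≤ 16 : use π(81) = 22 ≥ 16 + π(15)
    have h81 : (81:ℕ) ≤ x ^ 2 := by nlinarith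
    have hA : Nat.primeCounting 81 = 22 := by decide
    have hB : Nat.primeCounting 15 = 6 := by decide
    have h1 : 22 ≤ Nat.primeCounting (x ^ 2) := hA ▸ Nat.monotone_primeCounting h81
    have h2 : Nat.primeCounting (x - 1) ≤ 6 :=
      hB ▸ Nat.monotone_primeCounting (by omega)
    omega
  · -- tail: x ≥ 17
    have hc : 5 ≤ Nat.clog 2 x := by
      have h16 : (2:ℕ) ^ 4 < x := by norm_num; omega
      have := (Nat.lt_clog_iff_pow_lt one_lt_two).mpr h16
      omega
    set c := Nat.clog 2 x with hcdef
    have hc0 : 0 < c := by omega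
    have h3c : 3 * c ≤ x - 1 := by
      have h1 : 2 ^ (c - 1) < x := Nat.pow_pred_clog_lt_self one_lt_two (by omega)
      have := three_clog_le_aux c hc
      omega
    set n := x ^ 2 / 2 with hn
    have hn4 : 4 ≤ n := by
      have : 17 ^ 2 ≤ x ^ 2 := Nat.pow_le_pow_left hge 2
      omega
    have hmle : 2 * n ≤ x ^ 2 := Nat.mul_div_le _ _
    have hmge : x ^ 2 - 1 ≤ 2 * n := by
      have := Nat.lt_div_mul_add (a := x ^ 2) (b := 2) (by norm_num)
      omega
    have hcheb := cheb_lower_aux n hn4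
    set L := Nat.clog 2 (2 * n) with hLdef
    have hL0 : 0 < L := Nat.clog_pos one_lt_two (by omega)
    have hL2c : L ≤ 2 * c := by
      rw [hLdef, Nat.clog_le_iff_le_pow one_lt_two]
      calc 2 * n ≤ x ^ 2 := hmle
        _ ≤ (2 ^ c) ^ 2 := Nat.pow_le_pow_left (Nat.le_pow_clog one_lt_two x) 2
        _ = 2 ^ (2 * c) := by rw [← pow_mul, mul_comm]
    -- bound on π(x-1)
    have hpix : 2 * Nat.primeCounting (x - 1) ≤ x + 1 := by
      have h := Nat.primeCounting'_add_le (a := 2) (k := 3) (by norm_num) (by norm_num) (x - 3)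
      have h3x : 3 + (x - 3) = x := by omega
      rw [h3x] at h
      have hp3 : Nat.primeCounting' 3 = 1 := by decide
      have ht : Nat.totient 2 = 1 := by decide
      rw [hp3, ht] at h
      have hsub : Nat.primeCounting (x - 1) = Nat.primeCounting' x := Nat.primeCounting_sub_one x
      omega
    -- key inequality
    have hsq : (x - 1) * (x + 1) + 1 = x ^ 2 := by
      obtain ⟨y, rfl⟩ := Nat.exists_eq_add_of_le (show 1 ≤ x by omega)
      have h1 : 1 + y - 1 = y := by omega
      rw [h1]
      ring
    have hkey : Nat.primeCounting (x - 1) + x ≤ (x ^ 2 - 1) / (2 * c) := by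
      rw [Nat.le_div_iff_mul_le (by omega)]
      have step1 : (Nat.primeCounting (x - 1) + x) * (2 * c) ≤ (3 * x + 1) * c := by
        have : (Nat.primeCounting (x - 1) + x) * (2 * c)
            = (2 * Nat.primeCounting (x - 1) + 2 * x) * c := by ring
        rw [this]
        exact Nat.mul_le_mul_right c (by omega)
      have step2 : (3 * x + 1) * c ≤ (3 * c) * (x + 1) := by nlinarith
      have step3 : (3 * c) * (x + 1) ≤ (x - 1) * (x + 1) := Nat.mul_le_mul_right _ h3c
      omega
    have hchain : (x ^ 2 - 1) / (2 * c) ≤ Nat.primeCounting (x ^ 2) := by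
      calc (x ^ 2 - 1) / (2 * c) ≤ (2 * n) / (2 * c) := Nat.div_le_div_right hmge
        _ ≤ (2 * n) / L := Nat.div_le_div_left hL2c hL0
        _ ≤ Nat.primeCounting (2 * n) := hcheb
        _ ≤ Nat.primeCounting (x ^ 2) := Nat.monotone_primeCounting hmle
    have : Nat.primeCounting (x - 1) + x ≤ Nat.primeCounting (x ^ 2) := le_trans hkey hchain
    omega
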